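/- Let a < 1/2 be a real number and let (ρ_i)_{i∈ι} be a family of complex numbers indexed by a countable set ι such that for every i one has ρ_i ≠ 1 − a and 0 ≤ Re ρ_i ≤ 1, and such that the family i ↦ (1 + |Re ρ_i|)/(1 + |ρ_i|)² is summable. Then for every positive integer n the family i ↦ Re[1 − ((ρ_i − a)/(ρ_i + a − 1))^{n}] is summable. -/

import Mathlib

lemma geom_aux (w : ℂ) (L : ℝ) (hL : 1 ≤ L) (hw : ‖w‖ ≤ L) (k : ℕ) :
    ‖w ^ k - 1‖ ≤ k * L ^ k * ‖w - 1‖ := by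
  induction k with
  | zero => simp
  | succ k ih =>
    have h1 : w ^ (k + 1) - 1 = w ^ k * (w - 1) + (w ^ k - 1) := by ring
    have h2 : ‖w ^ k * (w - 1)‖ ≤ L ^ k * ‖w - 1‖ := by
      rw [norm_mul, norm_pow]
      gcongr
    have h3 : L ^ k ≤ L ^ (k + 1) := pow_le_pow_right₀ hL (by omega)
    have h4 := norm_add_le (w ^ k * (w - 1)) (w ^ k - 1)
    rw [h1]
    have h5 : (0:ℝ) ≤ ‖w - 1‖ := norm_nonneg _
    have h6 : (0:ℝ) ≤ L ^ k := by positivity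
    push_cast
    nlinarith [ih, mul_le_mul_of_nonneg_right h3 h5]

set_option maxHeartbeats 1000000 in
lemma key_est (a : ℝ) (ha : a < 1 / 2) (n : ℕ) (ρ : ℂ) (hρ : ρ ≠ 1 - a)
    (hx0 : 0 ≤ ρ.re) (hx1 : ρ.re ≤ 1) (hA : 2 * |a - 1| + 2 ≤ ‖ρ‖) :
    |(1 - ((ρ - a) / (ρ + a - 1)) ^ n).re| ≤
      (4 * n * (1 - 2 * a) * (1 + |a - 1|) + 4 * (1 - 2 * a) ^ 2 * n ^ 2 * (2 - 2 * a) ^ n) *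
        ((1 + |ρ.re|) / (1 + ‖ρ‖) ^ 2) := by
  set b : ℝ := 1 - 2 * a with hb_def
  have hb : 0 < b := by simp only [hb_def]; linarith
  set d : ℂ := ρ + a - 1 with hd_def
  have hd_eq : d = ρ - ((1 - a : ℝ) : ℂ) := by push_cast [hd_def]; ring
  have hd : d ≠ 0 := by
    rw [hd_eq, sub_ne_zero]
    intro h
    apply hρ
    rw [h]; push_cast; ring
  set A : ℝ := ‖ρ‖ with hA_def
  have hA0 : 0 ≤ A := norm_nonneg _
  have hA2 : 2 ≤ A := by
    have : (0:ℝ) ≤ |a - 1| := abs_nonneg _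
    linarith
  -- |d| ≥ (1+A)/2
  have habs1a : ‖((1 - a : ℝ) : ℂ)‖ = |a - 1| := by
    rw [Complex.norm_real, Real.norm_eq_abs, abs_sub_comm]
  have hd_lb : (1 + A) / 2 ≤ ‖d‖ := by
    have h1 : ‖ρ‖ - ‖((1 - a : ℝ) : ℂ)‖ ≤ ‖d‖ := by
      rw [hd_eq]; exact norm_sub_norm_le ρ _
    rw [habs1a] at h1
    linarith
  have hd_pos : 0 < ‖d‖ := by linarith
  set u : ℂ := ((b : ℝ) : ℂ) / d with hu_def
  have hu_abs : ‖u‖ = b / ‖d‖ := by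
    rw [hu_def, norm_div, Complex.norm_real, Real.norm_eq_abs, abs_of_pos hb]
  have hu_le : ‖u‖ ≤ 2 * b / (1 + A) := by
    rw [hu_abs]
    rw [div_le_div_iff₀ hd_pos (by linarith)]
    nlinarith [hd_lb]
  have hu_b : ‖u‖ ≤ b := by
    have : 2 * b / (1 + A) ≤ b := by
      rw [div_le_iff₀ (by linarith)]
      nlinarith
    linarith
  set w : ℂ := (ρ - a) / d with hw_def
  have hw_eq : w = 1 + u := by
    have hbc : ((b : ℝ) : ℂ) = 1 - 2 * (a : ℂ) := by rw [hb_def]; push_cast; ring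
    rw [hw_def, hu_def, hbc]
    field_simp
    ring
  have hw_abs : ‖w‖ ≤ 1 + b := by
    rw [hw_eq]
    calc ‖1 + u‖ ≤ ‖1‖ + ‖u‖ := norm_add_le _ _
    _ ≤ 1 + b := by simp; exact hu_b
  -- Re u bound
  have hu_re : |u.re| ≤ 4 * b * (1 + |a - 1|) * (1 + |ρ.re|) / (1 + A) ^ 2 := by
    have h1 : u.re = b * d.re / Complex.normSq d := by
      rw [hu_def, Complex.div_re]
      simp [Complex.ofReal_re, Complex.ofReal_im]
    have h2 : |d.re| ≤ (1 + |a - 1|) * (1 + |ρ.re|) := by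
      have : d.re = ρ.re - (1 - a) := by rw [hd_eq]; simp
      rw [this]
      have h3 : |ρ.re - (1 - a)| ≤ |ρ.re| + |a - 1| := by
        have := abs_sub (ρ.re) ((1 - a : ℝ))
        calc |ρ.re - (1 - a)| ≤ |ρ.re| + |1 - a| := abs_sub _ _
        _ = |ρ.re| + |a - 1| := by rw [abs_sub_comm]
      nlinarith [abs_nonneg (ρ.re), abs_nonneg (a - 1)]
    have h4 : Complex.normSq d = (‖d‖) ^ 2 := (Complex.sq_norm d).symm
    have h5 : (1 + A) ^ 2 / 4 ≤ Complex.normSq d := by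
      rw [h4]
      nlinarith [hd_lb]
    have h1A : (1 + A) ≠ 0 := by positivity
    rw [h1, abs_div, abs_mul, abs_of_pos hb, abs_of_nonneg (Complex.normSq_nonneg d)]
    have hnum : b * |d.re| ≤ b * ((1 + |a - 1|) * (1 + |ρ.re|)) :=
      mul_le_mul_of_nonneg_left h2 hb.le
    have hden : (0:ℝ) < (1 + A) ^ 2 / 4 := by positivity
    calc b * |d.re| / Complex.normSq d
        ≤ (b * ((1 + |a - 1|) * (1 + |ρ.re|))) / ((1 + A) ^ 2 / 4) :=
          div_le_div₀ (by positivity) hnum hden h5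
      _ = 4 * b * (1 + |a - 1|) * (1 + |ρ.re|) / (1 + A) ^ 2 := by
          field_simp
  -- setup for the geometric decomposition
  set S : ℂ := ∑ k ∈ Finset.range n, (w ^ k - 1) with hS_def
  have hw1 : w - 1 = u := by rw [hw_eq]; ring
  have hgeom : (∑ k ∈ Finset.range n, w ^ k) * (w - 1) = w ^ n - 1 := geom_sum_mul w n
  have hsum_eq : (∑ k ∈ Finset.range n, w ^ k) = S + n := by
    rw [hS_def, Finset.sum_sub_distrib]
    simp
  have hdecomp : 1 - w ^ n = -((n : ℂ) * u) - S * u := by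
    have : w ^ n - 1 = (S + n) * u := by rw [← hgeom, hsum_eq, hw1]
    have h2 : 1 - w ^ n = -((S + n) * u) := by rw [← this]; ring
    rw [h2]; ring
  have hre : (1 - w ^ n).re = -(((n : ℂ) * u).re) - (S * u).re := by
    rw [hdecomp]; simp
  have habsre : |(1 - w ^ n).re| ≤ n * |u.re| + ‖S‖ * ‖u‖ := by
    rw [hre]
    have h1 : |(S * u).re| ≤ ‖S‖ * ‖u‖ := by
      calc |(S * u).re| ≤ ‖S * u‖ := Complex.abs_re_le_norm _
        _ = ‖S‖ * ‖u‖ := norm_mul _ _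
    have h2 : ((n : ℂ) * u).re = n * u.re := by
      simp [Complex.mul_re]
    have h3 : |-(((n : ℂ) * u).re) - (S * u).re| ≤ |((n : ℂ) * u).re| + |(S * u).re| := by
      calc |-(((n : ℂ) * u).re) - (S * u).re| = |(((n : ℂ) * u).re) + (S * u).re| := by
            rw [← abs_neg]; ring_nf
        _ ≤ |((n : ℂ) * u).re| + |(S * u).re| := abs_add_le _ _
    have h4 : |((n : ℂ) * u).re| = n * |u.re| := by
      rw [h2, abs_mul, Nat.abs_cast]
    linarith
  set T : ℝ := (1 + |ρ.re|) / (1 + A) ^ 2 with hT_def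
  have hdenpos : (0:ℝ) < (1 + A) ^ 2 := by positivity
  have hT0 : 0 ≤ T := by positivity
  have hT1 : 1 / (1 + A) ^ 2 ≤ T := by
    rw [hT_def]
    gcongr
    · linarith [abs_nonneg ρ.re]
  have hu2 : ‖u‖ * ‖u‖ ≤ 4 * b ^ 2 / (1 + A) ^ 2 := by
    have h1 : ‖u‖ * ‖u‖ ≤ (2 * b / (1 + A)) * (2 * b / (1 + A)) :=
      mul_le_mul hu_le hu_le (norm_nonneg u) (by positivity)
    have h2 : (2 * b / (1 + A)) * (2 * b / (1 + A)) = 4 * b ^ 2 / (1 + A) ^ 2 := by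
      field_simp; ring
    linarith
  have hS_le : ‖S‖ ≤ n ^ 2 * (1 + b) ^ n * ‖u‖ := by
    calc ‖S‖ ≤ ∑ k ∈ Finset.range n, ‖w ^ k - 1‖ :=
          norm_sum_le _ _
      _ ≤ ∑ _k ∈ Finset.range n, ((n : ℝ) * (1 + b) ^ n * ‖u‖) := by
          apply Finset.sum_le_sum
          intro k hk
          have h1 := geom_aux w (1 + b) (by linarith) hw_abs k
          rw [hw1] at h1
          have hk' : (k : ℝ) ≤ (n : ℝ) := by
            exact_mod_cast (Finset.mem_range.mp hk).le
          have hpk : (1 + b) ^ k ≤ (1 + b) ^ n :=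
            pow_le_pow_right₀ (by linarith) (Finset.mem_range.mp hk).le
          have hpk0 : (0:ℝ) ≤ (1 + b) ^ k := by positivity
          have h2 : (k : ℝ) * (1 + b) ^ k ≤ (n : ℝ) * (1 + b) ^ n :=
            mul_le_mul hk' hpk hpk0 (Nat.cast_nonneg n)
          have h3 := mul_le_mul_of_nonneg_right h2 (norm_nonneg u)
          linarith
      _ = n * ((n : ℝ) * (1 + b) ^ n * ‖u‖) := by
          rw [Finset.sum_const, Finset.card_range, nsmul_eq_mul]
      _ = n ^ 2 * (1 + b) ^ n * ‖u‖ := by ring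
  have t1 : (n : ℝ) * |u.re| ≤ 4 * n * b * (1 + |a - 1|) * T := by
    have h1 := mul_le_mul_of_nonneg_left hu_re (Nat.cast_nonneg (α := ℝ) n)
    calc (n : ℝ) * |u.re| ≤ n * (4 * b * (1 + |a - 1|) * (1 + |ρ.re|) / (1 + A) ^ 2) := h1
      _ = 4 * n * b * (1 + |a - 1|) * T := by rw [hT_def]; ring
  have t2 : ‖S‖ * ‖u‖ ≤ 4 * b ^ 2 * (n:ℝ) ^ 2 * (1 + b) ^ n * T := by
    have h1 : ‖S‖ * ‖u‖ ≤
        ((n:ℝ) ^ 2 * (1 + b) ^ n) * (‖u‖ * ‖u‖) := by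
      have := mul_le_mul_of_nonneg_right hS_le (norm_nonneg u)
      nlinarith [this]
    have hc0 : (0:ℝ) ≤ (n:ℝ) ^ 2 * (1 + b) ^ n := by positivity
    calc ‖S‖ * ‖u‖
        ≤ ((n:ℝ) ^ 2 * (1 + b) ^ n) * (4 * b ^ 2 / (1 + A) ^ 2) := by nlinarith [hu2, h1]
      _ = ((n:ℝ) ^ 2 * (1 + b) ^ n) * (4 * b ^ 2) * (1 / (1 + A) ^ 2) := by ring
      _ ≤ ((n:ℝ) ^ 2 * (1 + b) ^ n) * (4 * b ^ 2) * T := by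
          have : (0:ℝ) ≤ ((n:ℝ) ^ 2 * (1 + b) ^ n) * (4 * b ^ 2) := by positivity
          exact mul_le_mul_of_nonneg_left hT1 this
      _ = 4 * b ^ 2 * (n:ℝ) ^ 2 * (1 + b) ^ n * T := by ring
  have h1b : (1:ℝ) + b = 2 - 2 * a := by rw [hb_def]; ring
  calc |(1 - w ^ n).re| ≤ n * |u.re| + ‖S‖ * ‖u‖ := habsre
    _ ≤ 4 * n * b * (1 + |a - 1|) * T + 4 * b ^ 2 * (n:ℝ) ^ 2 * (1 + b) ^ n * T := by
        linarith
    _ = (4 * n * b * (1 + |a - 1|) + 4 * b ^ 2 * (n:ℝ) ^ 2 * (1 + b) ^ n) * T := by ring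
    _ = (4 * n * (1 - 2 * a) * (1 + |a - 1|) + 4 * (1 - 2 * a) ^ 2 * n ^ 2 * (2 - 2 * a) ^ n) * T := by
        rw [h1b, hb_def]

/-- Absolute convergence of the real parts of the modified Li coefficients for a
multiset of points in the critical strip (Lagarias-type lemma). -/
theorem modified_li_coeff_summable (a : ℝ) (ha : a < 1 / 2)
    {ι : Type*} [Countable ι] (ρ : ι → ℂ)
    (hne : ∀ i, ρ i ≠ 1 - a)
    (hre : ∀ i, 0 ≤ (ρ i).re ∧ (ρ i).re ≤ 1)
    (hsum : Summable fun i => (1 + |(ρ i).re|) / (1 + ‖ρ i‖) ^ 2) :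
    ∀ n : ℕ, 0 < n →
      Summable fun i => (1 - ((ρ i - a) / (ρ i + a - 1)) ^ n).re := by
  intro n _hn
  set R : ℝ := 2 * |a - 1| + 2 with hR_def
  set C : ℝ :=
    4 * n * (1 - 2 * a) * (1 + |a - 1|) + 4 * (1 - 2 * a) ^ 2 * n ^ 2 * (2 - 2 * a) ^ n
    with hC_def
  set g : ι → ℝ := fun i => (1 + |(ρ i).re|) / (1 + ‖ρ i‖) ^ 2 with hg_def
  -- the set of small zeros is finite
  have hRpos : (0:ℝ) < 1 + R := by positivity
  have hfin : {i : ι | ‖ρ i‖ < R}.Finite := by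
    have h0 : (0:ℝ) < 1 / (1 + R) ^ 2 := by positivity
    have h1 : {i : ι | ¬ g i < 1 / (1 + R) ^ 2}.Finite := by
      have := hsum.tendsto_cofinite_zero
      have h2 : ∀ᶠ i in Filter.cofinite, g i < 1 / (1 + R) ^ 2 := by
        have := this.eventually (eventually_lt_nhds h0)  -- f i < ε eventually? need |f| small
        exact this
      simpa [Filter.eventually_cofinite] using h2
    apply h1.subset
    intro i hi
    simp only [Set.mem_setOf_eq, not_lt] at hi ⊢
    rw [hg_def]
    have hA0 : 0 ≤ ‖ρ i‖ := norm_nonneg _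
    have h3 : (1 + ‖ρ i‖) ^ 2 ≤ (1 + R) ^ 2 := by nlinarith
    have h4 : (0:ℝ) < (1 + ‖ρ i‖) ^ 2 := by positivity
    have h5 : (1:ℝ) ≤ 1 + |(ρ i).re| := by linarith [abs_nonneg (ρ i).re]
    calc 1 / (1 + R) ^ 2 ≤ 1 / (1 + ‖ρ i‖) ^ 2 := by
          apply div_le_div_of_nonneg_left (by norm_num) h4 h3
      _ ≤ (1 + |(ρ i).re|) / (1 + ‖ρ i‖) ^ 2 := by gcongr
  -- reduce to the complement of the finite set
  rw [← hfin.summable_compl_iff]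
  apply Summable.of_norm_bounded
    (g := fun i : ↑{i : ι | ‖ρ i‖ < R}ᶜ => C * g i)
  · exact (hsum.subtype _).mul_left C
  · rintro ⟨i, hi⟩
    simp only [Set.mem_compl_iff, Set.mem_setOf_eq, not_lt] at hi
    have hkey := key_est a ha n (ρ i) (hne i) (hre i).1 (hre i).2 hi
    simpa [Real.norm_eq_abs, hg_def, hC_def] using hkey
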